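/- Let T be a tree with b(T) ≥ 2 and let f be a maximum-weight bn-independent broadcast on T minimizing the number of overdominated branch vertices. Then no leaf l overdominates a branch vertex w by exactly 2, i.e., there is no leaf l with f(l) = d(l,w) + 2 for a branch vertex w overdominated by l. -/

import Mathlib

open SimpleGraph Finset
open scoped Classical

noncomputable section

/-- Eccentricity of a vertex. -/
def gecc {V : Type*} (G : SimpleGraph V) [Fintype V] (v : V) : ℕ :=
  Finset.univ.sup fun u => G.dist v u

/-- A broadcast: `f v ≤ e(v)` for all `v`. -/
def IsBroadcast {V : Type*} (G : SimpleGraph V) [Fintype V] (f : V → ℕ) : Prop :=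
  ∀ v, f v ≤ gecc G v

/-- `u` hears `f` from `v`. -/
def Hears {V : Type*} (G : SimpleGraph V) (f : V → ℕ) (u v : V) : Prop :=
  0 < f v ∧ G.dist u v ≤ f v

/-- Boundary independent broadcast: a vertex hearing two or more broadcasting
vertices lies in the boundary of each. -/
def BnIndep {V : Type*} (G : SimpleGraph V) [Fintype V] (f : V → ℕ) : Prop :=
  IsBroadcast G f ∧
    ∀ w v₁ v₂, v₁ ≠ v₂ → Hears G f w v₁ → Hears G f w v₂ → G.dist w v₁ = f v₁

/-- Weight of a broadcast. -/
def bweight {V : Type*} [Fintype V] (f : V → ℕ) : ℕ := ∑ v, f v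

/-- The boundary independence number. -/
def alphaBn {V : Type*} (G : SimpleGraph V) [Fintype V] : ℕ :=
  sSup {w | ∃ f, BnIndep G f ∧ bweight f = w}

/-- Set of branch vertices (degree at least 3). -/
def branchSet {V : Type*} (G : SimpleGraph V) [Fintype V] : Finset V :=
  Finset.univ.filter fun v => 3 ≤ G.degree v

/-- `l` is a leaf joined to `v` by an endpath (all internal vertices of degree 2). -/
def IsEndpathTo {V : Type*} (G : SimpleGraph V) [Fintype V] (v l : V) : Prop :=
  G.degree l = 1 ∧ ∃ p : G.Walk v l, p.IsPath ∧
    ∀ u ∈ p.support, u ≠ v → u ≠ l → G.degree u = 2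

/-- Leaf set `L(v)` of a vertex `v`. -/
def leafSet {V : Type*} (G : SimpleGraph V) [Fintype V] (v : V) : Finset V :=
  Finset.univ.filter fun l => IsEndpathTo G v l

/-- `R(T)`: branch vertices with at most one leaf in their leaf set. -/
def rset {V : Type*} (G : SimpleGraph V) [Fintype V] : Finset V :=
  (branchSet G).filter fun v => (leafSet G v).card ≤ 1

/-- Edge `uv` is covered by broadcasting vertex `x`. -/
def Covers {V : Type*} (G : SimpleGraph V) (f : V → ℕ) (x u v : V) : Prop :=
  0 < f x ∧ G.Adj u v ∧ G.dist u x ≤ f x ∧ G.dist v x ≤ f x ∧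
    (G.dist u x < f x ∨ G.dist v x < f x)

/-- The graph `G - U_f^E` obtained by deleting all `f`-uncovered edges. -/
def coveredSubgraph {V : Type*} (G : SimpleGraph V) (f : V → ℕ) : SimpleGraph V where
  Adj u v := G.Adj u v ∧ ∃ x, Covers G f x u v
  symm := ⟨by
    rintro u v ⟨h, x, h1, h2, h3, h4, h5⟩
    exact ⟨h.symm, x, h1, h2.symm, h4, h3, h5.symm⟩⟩
  loopless := ⟨by rintro u ⟨h, -⟩; exact G.loopless.irrefl u h⟩

/-- `f` is a maximal bn-independent broadcast. -/
def MaximalBn {V : Type*} (G : SimpleGraph V) [Fintype V] (f : V → ℕ) : Prop :=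
  BnIndep G f ∧ ∀ g, BnIndep G g → (∀ v, f v ≤ g v) → g = f

/-- The `f`-private boundary of `v`: vertices of `N_f(v)` not dominated once the
broadcast strength of `v` is lowered by one. -/
def privBoundary {V : Type*} (G : SimpleGraph V) (f : V → ℕ) (v : V) : Set V :=
  {u | G.dist u v ≤ f v ∧ ∀ x, ¬ Hears G (Function.update f v (f v - 1)) u x}

/-- The branch representation: branch vertices adjacent iff the path between them
contains no other branch vertex. -/
def branchRep {V : Type*} (G : SimpleGraph V) [Fintype V] : SimpleGraph V where
  Adj b₁ b₂ := b₁ ≠ b₂ ∧ 3 ≤ G.degree b₁ ∧ 3 ≤ G.degree b₂ ∧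
    ∀ p : G.Walk b₁ b₂, p.IsPath → ∀ u ∈ p.support, 3 ≤ G.degree u → u = b₁ ∨ u = b₂
  symm := ⟨by
    rintro a b ⟨hab, ha, hb, h⟩
    refine ⟨hab.symm, hb, ha, fun p hp u hu hdeg => ?_⟩
    have hu' : u ∈ p.reverse.support := by
      rw [SimpleGraph.Walk.support_reverse]; exact List.mem_reverse.mpr hu
    exact (h p.reverse hp.reverse u hu' hdeg).symm⟩
  loopless := ⟨by rintro v ⟨h, -⟩; exact h rfl⟩

/-- Hearing independent broadcast. -/
def HIndep {V : Type*} (G : SimpleGraph V) [Fintype V] (f : V → ℕ) : Prop :=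
  IsBroadcast G f ∧ ∀ u v, u ≠ v → 0 < f u → 0 < f v → f v < G.dist u v

/-- The hearing independence number. -/
def alphaH {V : Type*} (G : SimpleGraph V) [Fintype V] : ℕ :=
  sSup {w | ∃ f, HIndep G f ∧ bweight f = w}

/-- Diameter. -/
def gdiam {V : Type*} (G : SimpleGraph V) [Fintype V] : ℕ :=
  Finset.univ.sup fun v => gecc G v

section Helpers
set_option linter.unusedSectionVars false
set_option linter.unusedVariables false

variable {V : Type*} [Fintype V] {T : SimpleGraph V}

lemma tree_path_length (hT : T.IsTree) {a b : V} (p : T.Walk a b) (hp : p.IsPath) :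
    p.length = T.dist a b := by
  obtain ⟨q, hq, hql⟩ := hT.isConnected.exists_path_of_dist a b
  have : (⟨p, hp⟩ : T.Path a b) = ⟨q, hq⟩ := hT.IsAcyclic.path_unique _ _
  rw [show p = q from congrArg Subtype.val this, hql]

lemma support_dist_le (hT : T.IsTree) {x l u : V} (p : T.Walk x l) (hp : p.IsPath)
    (hu : u ∈ p.support) : T.dist u l ≤ p.length :=
  le_trans (SimpleGraph.dist_le (p.dropUntil u hu)) (SimpleGraph.Walk.length_dropUntil_le p hu)

lemma adj_dist (hT : T.IsTree) {a x l : V} (h : T.Adj a x) :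
    T.dist x l = T.dist a l + 1 ∨ T.dist a l = T.dist x l + 1 := by
  obtain ⟨p, hp, hpl⟩ := hT.isConnected.exists_path_of_dist x l
  by_cases ha : a ∈ p.support
  · left
    have h1 : (p.takeUntil a ha).length = 1 := by
      rw [tree_path_length hT _ (hp.takeUntil ha)]
      exact SimpleGraph.dist_eq_one_iff_adj.mpr h.symm
    have h2 : (p.dropUntil a ha).length = T.dist a l :=
      tree_path_length hT _ (hp.dropUntil ha)
    have h3 := congrArg SimpleGraph.Walk.length (p.take_spec ha)
    rw [SimpleGraph.Walk.length_append, h1, h2, hpl] at h3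
    omega
  · right
    have := tree_path_length hT (SimpleGraph.Walk.cons h p) (hp.cons ha)
    simp only [SimpleGraph.Walk.length_cons, hpl] at this
    omega

lemma closer_unique (hT : T.IsTree) {w l x y : V} (hx : T.Adj w x) (hy : T.Adj w y)
    (hdx : T.dist w l = T.dist x l + 1) (hdy : T.dist w l = T.dist y l + 1) : x = y := by
  obtain ⟨px, hpx, hpxl⟩ := hT.isConnected.exists_path_of_dist x l
  obtain ⟨py, hpy, hpyl⟩ := hT.isConnected.exists_path_of_dist y l
  have hwx : w ∉ px.support := fun hw => by
    have := support_dist_le hT px hpx hw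
    rw [hpxl] at this; omega
  have hwy : w ∉ py.support := fun hw => by
    have := support_dist_le hT py hpy hw
    rw [hpyl] at this; omega
  have : (⟨SimpleGraph.Walk.cons hx px, hpx.cons hwx⟩ : T.Path w l)
      = ⟨SimpleGraph.Walk.cons hy py, hpy.cons hwy⟩ := hT.IsAcyclic.path_unique _ _
  have hsupp := congrArg (fun q : T.Path w l => q.val.support) this
  simp only [SimpleGraph.Walk.support_cons] at hsupp
  have hx' := px.support_eq_cons
  have hy' := py.support_eq_cons
  rw [hx', hy'] at hsupp
  simp only [List.cons.injEq] at hsupp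
  exact hsupp.2.1

lemma no_triangle (hT : T.IsTree) {a b c : V} (hab : T.Adj a b) (hbc : T.Adj b c)
    (hca : T.Adj c a) : False := by
  have h1 : (SimpleGraph.Walk.cons hca.symm SimpleGraph.Walk.nil : T.Walk a c).IsPath := by
    simp [SimpleGraph.Walk.isPath_def, hca.symm.ne]
  have h2 : (SimpleGraph.Walk.cons hab (SimpleGraph.Walk.cons hbc SimpleGraph.Walk.nil) :
      T.Walk a c).IsPath := by
    simp [SimpleGraph.Walk.isPath_def, hab.ne, hbc.ne, hca.ne']
  have := hT.IsAcyclic.path_unique (⟨_, h1⟩ : T.Path a c) ⟨_, h2⟩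
  have := congrArg (fun q : T.Path a c => q.val.length) this
  simp at this

lemma two_far_neighbors (hT : T.IsTree) {w : V} (l : V) (hw : 3 ≤ T.degree w) :
    ∃ u u' : V, u ≠ u' ∧ T.Adj w u ∧ T.Adj w u' ∧
      T.dist u l = T.dist w l + 1 ∧ T.dist u' l = T.dist w l + 1 := by
  classical
  set S := (T.neighborFinset w).filter (fun x => T.dist x l = T.dist w l + 1) with hS
  have hsplit : S.card + ((T.neighborFinset w).filter
      (fun x => ¬ T.dist x l = T.dist w l + 1)).card = (T.neighborFinset w).card := by
    rw [hS]; exact Finset.card_filter_add_card_filter_not _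
  have hcompl : ((T.neighborFinset w).filter
      (fun x => ¬ T.dist x l = T.dist w l + 1)).card ≤ 1 := by
    apply Finset.card_le_one.mpr
    intro a ha b hb
    simp only [Finset.mem_filter, SimpleGraph.mem_neighborFinset] at ha hb
    exact closer_unique hT ha.1 hb.1 ((adj_dist hT ha.1).resolve_left ha.2)
      ((adj_dist hT hb.1).resolve_left hb.2)
  have hdeg : (T.neighborFinset w).card = T.degree w := T.card_neighborFinset_eq_degree w
  have hcard : 1 < S.card := by omega
  obtain ⟨u, hu, u', hu', hne⟩ := Finset.one_lt_card.mp hcard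
  simp only [hS, Finset.mem_filter, SimpleGraph.mem_neighborFinset] at hu hu'
  exact ⟨u, u', hne, hu.1, hu'.1, hu.2, hu'.2⟩

end Helpers

/-- In a maximum-weight bn-independent broadcast on a tree with at least two
branch vertices, chosen to minimize the number of overdominated branch vertices,
no leaf overdominates a branch vertex by exactly 2. -/
theorem stmt17 {V : Type*} [Fintype V] (T : SimpleGraph V) (hT : T.IsTree)
    (hb : 2 ≤ (branchSet T).card)
    (f : V → ℕ) (hf : BnIndep T f) (hmax : bweight f = alphaBn T)
    (hmin : ∀ g : V → ℕ, BnIndep T g → bweight g = alphaBn T →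
      (Finset.univ.filter fun w =>
          3 ≤ T.degree w ∧ ∃ v, 0 < f v ∧ T.dist w v < f v).card ≤
        (Finset.univ.filter fun w =>
          3 ≤ T.degree w ∧ ∃ v, 0 < g v ∧ T.dist w v < g v).card) :
    ¬ ∃ l w : V, T.degree l = 1 ∧ 3 ≤ T.degree w ∧ 0 < f l ∧
      f l = T.dist l w + 2 := by
  classical
  rintro ⟨l, w, hl1, hw3, hfl0, hflw⟩
  obtain ⟨hbr, hbn⟩ := hf
  have conn := hT.isConnected
  have hlw : l ≠ w := by intro h; rw [h] at hl1; omega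
  have hfl : f l = T.dist w l + 2 := by rw [hflw, SimpleGraph.dist_comm]
  set d := T.dist w l with hd
  obtain ⟨u, u', huu, hwu, hwu', hul, hu'l⟩ := two_far_neighbors hT l hw3
  rw [← hd] at hul hu'l
  have hune_l : u ≠ l := by
    intro h; rw [h, SimpleGraph.dist_self] at hul; omega
  have hu'ne_l : u' ≠ l := by
    intro h; rw [h, SimpleGraph.dist_self] at hu'l; omega
  have hhear_l : ∀ x : V, T.dist x l ≤ d + 2 → Hears T f x l :=
    fun x hx => ⟨by omega, by rw [hfl]; exact hx⟩
  have hzero : ∀ x : V, x ≠ l → T.dist x l < d + 2 → f x = 0 := by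
    intro x hx hxd
    by_contra h0
    have h0 : 0 < f x := Nat.pos_of_ne_zero h0
    have := hbn x x l hx ⟨h0, by rw [SimpleGraph.dist_self]; omega⟩ (hhear_l x (le_of_lt hxd))
    rw [SimpleGraph.dist_self] at this; omega
  have hfu : f u = 0 := hzero u hune_l (by omega)
  have hfu' : f u' = 0 := hzero u' hu'ne_l (by omega)
  have hfw : f w = 0 := hzero w (Ne.symm hlw) (by omega)
  set g : V → ℕ :=
    Function.update (Function.update (Function.update f l d) u 1) u' 1 with hg
  have hgl : g l = d := by
    rw [hg, Function.update_of_ne (Ne.symm hu'ne_l), Function.update_of_ne (Ne.symm hune_l),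
      Function.update_self]
  have hgu : g u = 1 := by
    rw [hg, Function.update_of_ne huu, Function.update_self]
  have hgu' : g u' = 1 := by rw [hg, Function.update_self]
  have hgo : ∀ v : V, v ≠ l → v ≠ u → v ≠ u' → g v = f v := by
    intro v h1 h2 h3
    rw [hg, Function.update_of_ne h3, Function.update_of_ne h2, Function.update_of_ne h1]
  have hHo : ∀ x v : V, v ≠ l → v ≠ u → v ≠ u' → Hears T g x v → Hears T f x v := by
    intro x v h1 h2 h3 h4
    obtain ⟨hp, hdv⟩ := h4
    rw [hgo v h1 h2 h3] at hp hdv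
    exact ⟨hp, hdv⟩
  have tri : ∀ a b c : V, T.dist a c ≤ T.dist a b + T.dist b c := fun a b c =>
    conn.dist_triangle
  have hdpos : 1 ≤ d := by
    have := conn.pos_dist_of_ne (Ne.symm hlw)
    omega
  -- g is a broadcast
  have hgb : IsBroadcast T g := by
    intro v
    by_cases h1 : v = l
    · symm at h1; subst h1; rw [hgl]
      have := hbr l
      omega
    by_cases h2 : v = u
    · symm at h2; subst h2; rw [hgu]
      have h3 : T.dist u l ≤ gecc T u := Finset.le_sup (Finset.mem_univ l)
      omega
    by_cases h3 : v = u'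
    · symm at h3; subst h3; rw [hgu']
      have h4 : T.dist u' l ≤ gecc T u' := Finset.le_sup (Finset.mem_univ l)
      omega
    · rw [hgo v h1 h2 h3]; exact hbr v
  -- symmetric key case for broadcasters of strength one at u / u'
  have mainU : ∀ a b : V, a ≠ b → T.Adj w a → T.Adj w b → T.dist a l = d + 1 →
      g a = 1 → g b = 1 →
      (∀ x v : V, v ≠ l → v ≠ a → v ≠ b → Hears T g x v → Hears T f x v) →
      ∀ x v₂ : V, v₂ ≠ a → Hears T g x a → Hears T g x v₂ →
      T.dist x a = 1 := by
    intro a b hab hwa hwb hal hga hgb2 hother x v₂ hne h1 h2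
    obtain ⟨-, hdxa⟩ := h1
    rw [hga] at hdxa
    have hanel : a ≠ l := by intro h; rw [h, SimpleGraph.dist_self] at hal; omega
    have hxa : x ≠ a := by
      intro hx
      symm at hx; subst hx
      by_cases h2l : v₂ = l
      · symm at h2l; subst h2l
        obtain ⟨-, hdxl⟩ := h2
        rw [hgl] at hdxl
        omega
      by_cases h2b : v₂ = b
      · symm at h2b; subst h2b
        obtain ⟨-, hdxb⟩ := h2
        rw [hgb2] at hdxb
        have hab1 : T.dist a b = 1 := by
          have := conn.pos_dist_of_ne hab
          omega
        exact no_triangle hT (SimpleGraph.dist_eq_one_iff_adj.mp hab1) hwb.symm hwa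
      · have h2f : Hears T f a v₂ := hother a v₂ h2l hne h2b h2
        have hhl : Hears T f a l := hhear_l a (by omega)
        have := hbn a l v₂ (fun h => h2l h.symm) hhl h2f
        rw [hfl] at this
        omega
    have := conn.pos_dist_of_ne hxa
    omega
  -- g is bn-independent
  have hgbn : BnIndep T g := by
    refine ⟨hgb, ?_⟩
    intro x v₁ v₂ hne h1 h2
    by_cases h1l : v₁ = l
    · symm at h1l; subst h1l
      rw [hgl]
      obtain ⟨-, hxl⟩ := h1
      rw [hgl] at hxl
      by_cases h2u : v₂ = u
      · symm at h2u; subst h2u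
        obtain ⟨-, hxu⟩ := h2
        rw [hgu] at hxu
        have h5 := tri u x l
        have h6 : T.dist u x = T.dist x u := SimpleGraph.dist_comm
        omega
      by_cases h2u' : v₂ = u'
      · symm at h2u'; subst h2u'
        obtain ⟨-, hxu⟩ := h2
        rw [hgu'] at hxu
        have h5 := tri u' x l
        have h6 : T.dist u' x = T.dist x u' := SimpleGraph.dist_comm
        omega
      · have h2f : Hears T f x v₂ := hHo x v₂ (fun h => hne h.symm) h2u h2u' h2
        have := hbn x l v₂ (fun h => hne h) (hhear_l x (by omega)) h2f
        rw [hfl] at this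
        omega
    by_cases h1u : v₁ = u
    · symm at h1u; subst h1u
      rw [hgu]
      exact mainU u u' huu hwu hwu' hul hgu hgu' hHo x v₂ (fun h => hne h.symm) h1 h2
    by_cases h1u' : v₁ = u'
    · symm at h1u'; subst h1u'
      rw [hgu']
      exact mainU u' u (Ne.symm huu) hwu' hwu hu'l hgu' hgu
        (fun x v hl hu' hu h => hHo x v hl hu hu' h) x v₂ (fun h => hne h.symm) h1 h2
    · rw [hgo v₁ h1l h1u h1u']
      have hf1 : Hears T f x v₁ := hHo x v₁ h1l h1u h1u' h1
      by_cases h2l : v₂ = l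
      · symm at h2l; subst h2l
        obtain ⟨-, hxl⟩ := h2
        rw [hgl] at hxl
        exact hbn x v₁ l h1l hf1 (hhear_l x (by omega))
      by_cases h2u : v₂ = u
      · symm at h2u; subst h2u
        obtain ⟨-, hxu⟩ := h2
        rw [hgu] at hxu
        have := tri x u l
        exact hbn x v₁ l h1l hf1 (hhear_l x (by omega))
      by_cases h2u' : v₂ = u'
      · symm at h2u'; subst h2u'
        obtain ⟨-, hxu⟩ := h2
        rw [hgu'] at hxu
        have := tri x u' l
        exact hbn x v₁ l h1l hf1 (hhear_l x (by omega))
      · exact hbn x v₁ v₂ hne hf1 (hHo x v₂ h2l h2u h2u' h2)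
  -- the weight of g equals the weight of f
  have hlne_u : l ≠ u := Ne.symm hune_l
  have hlne_u' : l ≠ u' := Ne.symm hu'ne_l
  have hmem_u : u ∈ (Finset.univ : Finset V) \ {u'} := by simp [huu]
  have hmem_l : l ∈ ((Finset.univ : Finset V) \ {u'}) \ {u} := by simp [hlne_u, hlne_u']
  have hsum : bweight g = bweight f := by
    have h1 : ∑ v, g v = 1 + ∑ v ∈ Finset.univ \ {u'},
        Function.update (Function.update f l d) u 1 v := by
      rw [hg]; exact Finset.sum_update_of_mem (Finset.mem_univ u') _ _
    have h2 : ∑ v ∈ Finset.univ \ {u'}, Function.update (Function.update f l d) u 1 v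
        = 1 + ∑ v ∈ (Finset.univ \ {u'}) \ {u}, Function.update f l d v :=
      Finset.sum_update_of_mem hmem_u _ _
    have h3 : ∑ v ∈ (Finset.univ \ {u'}) \ {u}, Function.update f l d v
        = d + ∑ v ∈ ((Finset.univ \ {u'}) \ {u}) \ {l}, f v :=
      Finset.sum_update_of_mem hmem_l _ _
    have h4 : ∑ v, f v = ∑ v ∈ Finset.univ \ {u'}, f v + f u' :=
      Finset.sum_eq_sum_sdiff_singleton_add (Finset.mem_univ u') f
    have h5 : ∑ v ∈ Finset.univ \ {u'}, f v
        = ∑ v ∈ (Finset.univ \ {u'}) \ {u}, f v + f u :=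
      Finset.sum_eq_sum_sdiff_singleton_add hmem_u f
    have h6 : ∑ v ∈ (Finset.univ \ {u'}) \ {u}, f v
        = ∑ v ∈ ((Finset.univ \ {u'}) \ {u}) \ {l}, f v + f l :=
      Finset.sum_eq_sum_sdiff_singleton_add hmem_l f
    unfold bweight
    rw [h1, h2, h3, h4, h5, h6, hfu, hfu', hfl]
    omega
  have hgw : bweight g = alphaBn T := by rw [hsum, hmax]
  have hcardle := hmin g hgbn hgw
  have hwOf : w ∈ Finset.univ.filter
      fun b => 3 ≤ T.degree b ∧ ∃ v, 0 < f v ∧ T.dist b v < f v :=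
    Finset.mem_filter.mpr ⟨Finset.mem_univ w, hw3, l, by omega, by omega⟩
  have hsub : (Finset.univ.filter fun b => 3 ≤ T.degree b ∧ ∃ v, 0 < g v ∧ T.dist b v < g v)
      ⊆ (Finset.univ.filter
          fun b => 3 ≤ T.degree b ∧ ∃ v, 0 < f v ∧ T.dist b v < f v).erase w := by
    intro b hb
    obtain ⟨-, hb3, v, hv0, hvd⟩ := Finset.mem_filter.mp hb
    by_cases hvl : v = l
    · symm at hvl; subst hvl
      rw [hgl] at hv0 hvd
      refine Finset.mem_erase.mpr ⟨?_, Finset.mem_filter.mpr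
        ⟨Finset.mem_univ b, hb3, l, by omega, by omega⟩⟩
      intro hbw
      rw [hbw] at hvd
      omega
    by_cases hvu : v = u
    · symm at hvu; subst hvu
      rw [hgu] at hvd
      have hbu : b = u := (conn.dist_eq_zero_iff).mp (by omega)
      refine Finset.mem_erase.mpr ⟨?_, Finset.mem_filter.mpr
        ⟨Finset.mem_univ b, hb3, l, by omega, ?_⟩⟩
      · rw [hbu]; exact hwu.ne'
      · rw [hbu]; omega
    by_cases hvu' : v = u'
    · symm at hvu'; subst hvu'
      rw [hgu'] at hvd
      have hbu : b = u' := (conn.dist_eq_zero_iff).mp (by omega)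
      refine Finset.mem_erase.mpr ⟨?_, Finset.mem_filter.mpr
        ⟨Finset.mem_univ b, hb3, l, by omega, ?_⟩⟩
      · rw [hbu]; exact hwu'.ne'
      · rw [hbu]; omega
    · rw [hgo v hvl hvu hvu'] at hv0 hvd
      refine Finset.mem_erase.mpr ⟨?_, Finset.mem_filter.mpr
        ⟨Finset.mem_univ b, hb3, v, hv0, hvd⟩⟩
      intro hbw
      rw [hbw] at hvd
      have := hbn w l v (fun h => hvl h.symm) (hhear_l w (by omega)) ⟨hv0, le_of_lt hvd⟩
      rw [hfl] at this
      omega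
  have h7 := Finset.card_le_card hsub
  rw [Finset.card_erase_of_mem hwOf] at h7
  have h8 : 0 < (Finset.univ.filter
      fun b => 3 ≤ T.degree b ∧ ∃ v, 0 < f v ∧ T.dist b v < f v).card :=
    Finset.card_pos.mpr ⟨w, hwOf⟩
  omega
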